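/- arXiv:1603.02971 — 3 statements merged into one kernel-verified Lean document; each statement's English description precedes it below -/
import Mathlib

section
/- Let S=(S,S̄) be a bisection, let u ∈ S̄ be a vertex of minimum rank with respect to S, let (A_u,B_u) be a u-pair for S and T the associated bisection. If y is an obstruction for T (i.e., def_T(y) < −a_y), then y ∈ S̄. -/
open Finset

/-- Number of neighbors of `x` in the set `A` (i.e. `W(x, A)`). -/
def nbrs {V : Type*} [DecidableEq V] (G : SimpleGraph V) [DecidableRel G.Adj]
    (x : V) (A : Finset V) : ℕ :=
  (A.filter (G.Adj x)).card

/-- Number of edges between the (disjoint) sets `A` and `B` (i.e. `W(A, B)`). -/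
def ew {V : Type*} [DecidableEq V] (G : SimpleGraph V) [DecidableRel G.Adj]
    (A B : Finset V) : ℕ :=
  ∑ x ∈ A, nbrs G x B

/-- Deficiency of `x` with respect to the bisection whose larger side is `S`:
`W(x,S) - W(x,S̄)` if `x ∈ S`, and `W(x,S̄) - W(x,S)` otherwise. -/
def defc {V : Type*} [Fintype V] [DecidableEq V] (G : SimpleGraph V)
    [DecidableRel G.Adj] (S : Finset V) (x : V) : ℤ :=
  if x ∈ S then (nbrs G x S : ℤ) - (nbrs G x Sᶜ : ℤ)
  else (nbrs G x Sᶜ : ℤ) - (nbrs G x S : ℤ)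

/-- Potential of the bisection `(S, S̄)`:
`Φ(S,S̄) = W(S,S̄) + (1/2)(Σ_{x∈S} a_x − Σ_{y∈S̄} a_y)`. -/
def pot {V : Type*} [Fintype V] [DecidableEq V] (G : SimpleGraph V)
    [DecidableRel G.Adj] (a : V → ℕ) (S : Finset V) : ℚ :=
  (ew G S Sᶜ : ℚ) + (∑ x ∈ S, (a x : ℚ) - ∑ y ∈ Sᶜ, (a y : ℚ)) / 2

/-- Rank of `u` with respect to the bisection `S`:
`rank_S(u) = ⌈(a_u + 1 − def_S(u)) / 2⌉`. -/
def rk {V : Type*} [Fintype V] [DecidableEq V] (G : SimpleGraph V)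
    [DecidableRel G.Adj] (a : V → ℕ) (S : Finset V) (u : V) : ℤ :=
  ⌈((((a u : ℤ) + 1 - defc G S u : ℤ) : ℚ)) / 2⌉

/-- A vertex `u` is stubborn if `a_u ≥ min {d(u), n − d(u) − 1}`. -/
def Stubborn {V : Type*} [Fintype V] [DecidableEq V] (G : SimpleGraph V)
    [DecidableRel G.Adj] (a : V → ℕ) (u : V) : Prop :=
  min (G.degree u : ℤ) ((Fintype.card V : ℤ) - (G.degree u : ℤ) - 1) ≤ (a u : ℤ)

/-- A `u`-pair `(A, B)` for the bisection `S`: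
if `u ∈ S`, `A ⊆ S ∩ N̄(u)`, `B ⊆ S̄ ∩ N(u)` with `|A| = |B| = rank_S(u)`;
if `u ∈ S̄`, `A ⊆ S ∩ N(u)`, `B ⊆ S̄ ∩ N̄(u)` with `|A| = rank_S(u)` and
`|B| = rank_S(u) − 1` (the vertex `u` itself is not moved). -/
def IsUPair {V : Type*} [Fintype V] [DecidableEq V] (G : SimpleGraph V)
    [DecidableRel G.Adj] (a : V → ℕ) (S : Finset V) (u : V)
    (A B : Finset V) : Prop :=
  if u ∈ S then
    A ⊆ S ∧ (∀ v ∈ A, ¬ G.Adj u v) ∧ u ∉ A ∧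
    B ⊆ Sᶜ ∧ (∀ v ∈ B, G.Adj u v) ∧
    (A.card : ℤ) = rk G a S u ∧ (B.card : ℤ) = rk G a S u
  else
    A ⊆ S ∧ (∀ v ∈ A, G.Adj u v) ∧
    B ⊆ Sᶜ ∧ (∀ v ∈ B, ¬ G.Adj u v) ∧ u ∉ B ∧
    (A.card : ℤ) = rk G a S u ∧ (B.card : ℤ) = rk G a S u - 1

/-- The larger side of the bisection associated with a `u`-pair `(A, B)`:
`S ∖ A ∪ B` if `u ∈ S`, and `S̄ ∖ B ∪ A` if `u ∈ S̄`. -/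
def assoc {V : Type*} [Fintype V] [DecidableEq V] (S : Finset V) (u : V)
    (A B : Finset V) : Finset V :=
  if u ∈ S then (S \ A) ∪ B else (Sᶜ \ B) ∪ A

lemma nbrs_union {V : Type*} [DecidableEq V] (G : SimpleGraph V) [DecidableRel G.Adj]
    (x : V) {C D : Finset V} (h : Disjoint C D) :
    nbrs G x (C ∪ D) = nbrs G x C + nbrs G x D := by
  unfold nbrs
  rw [Finset.filter_union, Finset.card_union_of_disjoint
    (h.mono (Finset.filter_subset _ _) (Finset.filter_subset _ _))]

lemma nbrs_le_card {V : Type*} [DecidableEq V] (G : SimpleGraph V) [DecidableRel G.Adj]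
    (x : V) (C : Finset V) : nbrs G x C ≤ C.card :=
  Finset.card_le_card (Finset.filter_subset _ _)

lemma nbrs_mono {V : Type*} [DecidableEq V] (G : SimpleGraph V) [DecidableRel G.Adj]
    (x : V) {C D : Finset V} (h : C ⊆ D) : nbrs G x C ≤ nbrs G x D :=
  Finset.card_le_card (Finset.filter_subset_filter _ h)

lemma nbrs_univ {V : Type*} [Fintype V] [DecidableEq V] (G : SimpleGraph V)
    [DecidableRel G.Adj] (x : V) : nbrs G x Finset.univ = G.degree x := by
  rw [nbrs, ← SimpleGraph.neighborFinset_eq_filter]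
  rfl

lemma nbrs_lt_of_mem {V : Type*} [DecidableEq V] (G : SimpleGraph V) [DecidableRel G.Adj]
    {x : V} {C : Finset V} (hx : x ∈ C) : nbrs G x C < C.card := by
  apply Finset.card_lt_card
  constructor
  · exact Finset.filter_subset _ _
  · intro hsub
    have := hsub hx
    simp only [Finset.mem_filter] at this
    exact G.irrefl this.2

/-- Lemma 6, first part: Let `u ∈ S̄` be a non-stubborn vertex of
minimum rank for the bisection `S`, `(A_u, B_u)` a `u`-pair for `S` and `T` the
associated bisection. If `y` is an obstruction for `T` (a vertex of the larger
side of `T` with `def_T(y) < −a_y`), then `y ∈ S̄`. -/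
theorem stmt9 {V : Type*} [Fintype V] [DecidableEq V]
    (G : SimpleGraph V) [DecidableRel G.Adj] (a : V → ℕ)
    (hodd : Odd (Fintype.card V))
    (S : Finset V) (hbis : 2 * S.card = Fintype.card V + 1)
    (u : V) (hu : u ∉ S) (hns : ¬ Stubborn G a u)
    (hminrank : ∀ v : V, ¬ Stubborn G a v → rk G a S u ≤ rk G a S v)
    (A B : Finset V) (hpair : IsUPair G a S u A B)
    (y : V) (hyT : y ∈ assoc S u A B)
    (hobs : defc G (assoc S u A B) y < -(a y : ℤ)) :
    y ∉ S := by
  intro hyS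
  rw [IsUPair, if_neg hu] at hpair
  obtain ⟨hAS, hAadj, hBS, hBnadj, huB, hcA, hcB⟩ := hpair
  rw [assoc, if_neg hu] at hyT hobs
  set T : Finset V := (Sᶜ \ B) ∪ A with hT
  -- basic disjointness
  have hABdisj : Disjoint A B := by
    apply Finset.disjoint_left.2
    intro v hvA hvB
    exact (Finset.mem_compl.1 (hBS hvB)) (hAS hvA)
  have hdisj1 : Disjoint (Sᶜ \ B) A := by
    apply Finset.disjoint_left.2
    intro v hv hvA
    exact (Finset.mem_compl.1 (Finset.mem_sdiff.1 hv).1) (hAS hvA)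
  have hdisj2 : Disjoint (S \ A) B := by
    apply Finset.disjoint_left.2
    intro v hv hvB
    exact (Finset.mem_compl.1 (hBS hvB)) (Finset.mem_sdiff.1 hv).1
  have hdisj3 : Disjoint (Sᶜ \ B) B := Finset.sdiff_disjoint
  have hdisj4 : Disjoint (S \ A) A := Finset.sdiff_disjoint
  -- y ∈ A
  have hyA : y ∈ A := by
    rcases Finset.mem_union.1 hyT with h | h
    · exact absurd hyS (Finset.mem_compl.1 (Finset.mem_sdiff.1 h).1)
    · exact h
  -- Tᶜ = (S \ A) ∪ B
  have hTc : Tᶜ = (S \ A) ∪ B := by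
    ext x
    simp only [hT, Finset.mem_compl, Finset.mem_union, Finset.mem_sdiff]
    have h1 : x ∈ A → x ∈ S := fun h => hAS h
    have h2 : x ∈ B → x ∉ S := fun h => Finset.mem_compl.1 (hBS h)
    tauto
  -- nbrs decompositions
  have e1 : nbrs G y T = nbrs G y (Sᶜ \ B) + nbrs G y A := nbrs_union G y hdisj1
  have e2 : nbrs G y Sᶜ = nbrs G y (Sᶜ \ B) + nbrs G y B := by
    conv_lhs => rw [show Sᶜ = (Sᶜ \ B) ∪ B from (Finset.sdiff_union_of_subset hBS).symm]
    exact nbrs_union G y hdisj3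
  have e3 : nbrs G y Tᶜ = nbrs G y (S \ A) + nbrs G y B := by
    rw [hTc]; exact nbrs_union G y hdisj2
  have e4 : nbrs G y S = nbrs G y (S \ A) + nbrs G y A := by
    conv_lhs => rw [show S = (S \ A) ∪ A from (Finset.sdiff_union_of_subset hAS).symm]
    exact nbrs_union G y hdisj4
  -- deficiency relation
  have hdefT : defc G T y = (nbrs G y T : ℤ) - nbrs G y Tᶜ := by
    rw [defc, if_pos hyT]
  have hdefS : defc G S y = (nbrs G y S : ℤ) - nbrs G y Sᶜ := by
    rw [defc, if_pos hyS]
  have hrel : defc G T y = - defc G S y + 2 * (nbrs G y A : ℤ) - 2 * nbrs G y B := by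
    rw [hdefT, hdefS, e1, e2, e3, e4]; push_cast; ring
  -- degree decomposition
  have hdeg : (G.degree y : ℤ) = nbrs G y T + nbrs G y Tᶜ := by
    have : nbrs G y (T ∪ Tᶜ) = nbrs G y T + nbrs G y Tᶜ :=
      nbrs_union G y disjoint_compl_right
    rw [Finset.union_compl, nbrs_univ] at this
    exact_mod_cast this
  -- cardinalities
  have hcardT : (T.card : ℤ) = (Fintype.card V : ℤ) - S.card + 1 := by
    have h1 : T.card = (Sᶜ \ B).card + A.card :=
      Finset.card_union_of_disjoint hdisj1
    have h2 : (Sᶜ \ B).card = Sᶜ.card - B.card := Finset.card_sdiff_of_subset hBS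
    have h3 : B.card ≤ Sᶜ.card := Finset.card_le_card hBS
    have h4 : S.card + Sᶜ.card = Fintype.card V := Finset.card_add_card_compl S
    have h2' : ((Sᶜ \ B).card : ℤ) = (Sᶜ.card : ℤ) - B.card := by
      rw [h2, Nat.cast_sub h3]
    have : ((Sᶜ.card : ℤ)) = (Fintype.card V : ℤ) - S.card := by
      omega
    rw [show ((T.card : ℤ)) = ((Sᶜ \ B).card : ℤ) + A.card by exact_mod_cast h1,
      h2', this, hcA, hcB]
    ring
  have hcardTc : 2 * (Tᶜ.card : ℤ) = (Fintype.card V : ℤ) - 1 := by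
    have h4 : T.card + Tᶜ.card = Fintype.card V := Finset.card_add_card_compl T
    have h4' : (T.card : ℤ) + Tᶜ.card = (Fintype.card V : ℤ) := by exact_mod_cast h4
    have hb : (2 * S.card : ℤ) = (Fintype.card V : ℤ) + 1 := by exact_mod_cast hbis
    omega
  -- y is not stubborn
  have hd1 : (a y : ℤ) < G.degree y := by
    have h1 : (nbrs G y Tᶜ : ℤ) ≤ G.degree y := by
      have := nbrs_mono G y (Finset.subset_univ Tᶜ)
      rw [nbrs_univ] at this
      exact_mod_cast this
    have h2 : (0 : ℤ) ≤ nbrs G y T := Int.ofNat_nonneg _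
    omega
  have hd2 : (a y : ℤ) < (Fintype.card V : ℤ) - G.degree y - 1 := by
    have h1 : (nbrs G y Tᶜ : ℤ) ≤ Tᶜ.card := by exact_mod_cast nbrs_le_card G y Tᶜ
    omega
  have hnsy : ¬ Stubborn G a y := by
    rw [Stubborn]
    omega
  -- rank bound
  have hnB : (nbrs G y B : ℤ) ≤ rk G a S u - 1 := by
    rw [← hcB]; exact_mod_cast nbrs_le_card G y B
  have hnA : (0 : ℤ) ≤ nbrs G y A := Int.ofNat_nonneg _
  have hdefSy : (a y : ℤ) - 2 * rk G a S u + 3 ≤ defc G S y := by omega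
  have hrky : rk G a S y ≤ rk G a S u - 1 := by
    rw [rk, Int.ceil_le]
    rw [show ((rk G a S u - 1 : ℤ) : ℚ) = ((rk G a S u : ℤ) : ℚ) - 1 by push_cast; ring]
    rw [div_le_iff₀ (by norm_num : (0:ℚ) < 2)]
    have : ((a y : ℤ) + 1 - defc G S y : ℤ) ≤ 2 * rk G a S u - 2 := by omega
    calc (((a y : ℤ) + 1 - defc G S y : ℤ) : ℚ) ≤ ((2 * rk G a S u - 2 : ℤ) : ℚ) := by
          exact_mod_cast this
      _ = (((rk G a S u : ℤ) : ℚ) - 1) * 2 := by push_cast; ring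
  have := hminrank y hnsy
  omega
end

section
/- Let S be a bisection with no vertex of minimum rank in S̄, let u ∈ S be of minimum rank ℓ, and let T be the bisection associated with a u-pair (A_u,B_u). Suppose y is an obstruction for T with def_S(y) < 0 and rank_S(y) > ℓ. Let S' = (S̄∪{y}, S∖{y}). Then rank_{S'}(y) ≤ ℓ. -/
open Finset

section Aux
variable {V : Type*} [Fintype V] [DecidableEq V] (G : SimpleGraph V) [DecidableRel G.Adj]

lemma nbrs_le_card_s12 (x : V) (A : Finset V) : nbrs G x A ≤ A.card :=
  Finset.card_filter_le _ _

lemma nbrs_union_of_disjoint (x : V) {A B : Finset V} (h : Disjoint A B) :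
    nbrs G x (A ∪ B) = nbrs G x A + nbrs G x B := by
  unfold nbrs
  rw [Finset.filter_union,
    Finset.card_union_of_disjoint (h.mono (Finset.filter_subset _ _) (Finset.filter_subset _ _))]

lemma nbrs_sdiff_add (x : V) {A C : Finset V} (h : A ⊆ C) :
    nbrs G x (C \ A) + nbrs G x A = nbrs G x C := by
  rw [← nbrs_union_of_disjoint G x Finset.sdiff_disjoint, Finset.sdiff_union_of_subset h]

lemma nbrs_insert_self (x : V) (A : Finset V) :
    nbrs G x (insert x A) = nbrs G x A := by
  unfold nbrs
  rw [Finset.filter_insert, if_neg (G.irrefl)]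

lemma nbrs_erase_self (x : V) (A : Finset V) :
    nbrs G x (A.erase x) = nbrs G x A := by
  unfold nbrs
  congr 1
  ext v
  simp only [Finset.mem_filter, Finset.mem_erase]
  constructor
  · rintro ⟨⟨-, hv⟩, ha⟩; exact ⟨hv, ha⟩
  · rintro ⟨hv, ha⟩
    exact ⟨⟨fun h => G.irrefl (h ▸ ha), hv⟩, ha⟩

lemma rk_le_iff {V : Type*} [Fintype V] [DecidableEq V] (G : SimpleGraph V)
    [DecidableRel G.Adj] (a : V → ℕ) (S : Finset V) (y : V) (m : ℤ) :
    rk G a S y ≤ m ↔ (a y : ℤ) + 1 - defc G S y ≤ 2 * m := by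
  rw [rk, Int.ceil_le, div_le_iff₀ (by norm_num : (0:ℚ) < 2),
    show ((m:ℤ):ℚ) * 2 = ((2*m : ℤ) : ℚ) by push_cast; ring]
  exact Int.cast_le

end Aux

/-- Lemma 8: Let `S` be a bisection with no non-stubborn vertex of
minimum rank in `S̄`, let `u ∈ S` be non-stubborn of minimum rank `ℓ`, and let `T`
be the bisection associated with a `u`-pair `(A_u, B_u)`. Suppose `y` is an
obstruction for `T` with `def_S(y) < 0` and `rank_S(y) > ℓ`. Then, for
`S' = (S̄ ∪ {y}, S ∖ {y})`, it holds `rank_{S'}(y) ≤ ℓ`. -/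

theorem stmt12 {V : Type*} [Fintype V] [DecidableEq V]
    (G : SimpleGraph V) [DecidableRel G.Adj] (a : V → ℕ)
    (hodd : Odd (Fintype.card V))
    (S : Finset V) (hbis : 2 * S.card = Fintype.card V + 1)
    (u : V) (hu : u ∈ S) (hns : ¬ Stubborn G a u)
    (ℓ : ℤ) (hℓ : ℓ = rk G a S u)
    (hminrank : ∀ v : V, ¬ Stubborn G a v → ℓ ≤ rk G a S v)
    (hnotbar : ∀ v : V, v ∉ S → ¬ Stubborn G a v → ℓ < rk G a S v)
    (A B : Finset V) (hpair : IsUPair G a S u A B)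
    (y : V) (hyT : y ∈ assoc S u A B)
    (hobs : defc G (assoc S u A B) y < -(a y : ℤ))
    (hnegdef : defc G S y < 0) (hrky : ℓ < rk G a S y) :
    rk G a (insert y Sᶜ) y ≤ ℓ := by
  rw [IsUPair, if_pos hu] at hpair
  obtain ⟨hAS, -, -, hBS, -, hcardA, hcardB⟩ := hpair
  rw [assoc, if_pos hu] at hyT hobs
  have hBS' : ∀ v, v ∈ B → v ∉ S := fun v hv => Finset.mem_compl.mp (hBS hv)
  have hTc : ((S \ A) ∪ B)ᶜ = (Sᶜ \ B) ∪ A := by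
    ext v
    have h1 := @hAS v
    have h2 := hBS' v
    simp only [Finset.mem_compl, Finset.mem_union, Finset.mem_sdiff, Finset.mem_compl] at *
    tauto
  have hdisj1 : Disjoint (S \ A) B :=
    Finset.disjoint_left.mpr (fun v hv hb => hBS' v hb (Finset.mem_sdiff.mp hv).1)
  have hdisj2 : Disjoint (Sᶜ \ B) A :=
    Finset.disjoint_left.mpr
      (fun v hv ha => (Finset.mem_compl.mp (Finset.mem_sdiff.mp hv).1) (hAS ha))
  set na := nbrs G y A with hna
  set nb := nbrs G y B with hnb
  set d1 := nbrs G y S with hd1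
  set d2 := nbrs G y Sᶜ with hd2
  have e1 : nbrs G y ((S \ A) ∪ B) + na = d1 + nb := by
    rw [nbrs_union_of_disjoint G y hdisj1]
    have := nbrs_sdiff_add G y hAS
    omega
  have e2 : nbrs G y (((S \ A) ∪ B)ᶜ) + nb = d2 + na := by
    rw [hTc, nbrs_union_of_disjoint G y hdisj2]
    have := nbrs_sdiff_add G y hBS
    omega
  have hyT' := hyT
  rw [defc, if_pos hyT] at hobs
  have hnaℓ : (na : ℤ) ≤ ℓ := by
    rw [hℓ, ← hcardA]
    exact_mod_cast nbrs_le_card_s12 G y A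
  by_cases hyS : y ∈ S
  · have hyS' : y ∈ insert y Sᶜ := Finset.mem_insert_self y _
    have hc1 : nbrs G y (insert y Sᶜ) = d2 := nbrs_insert_self G y Sᶜ
    have hc2 : nbrs G y ((insert y Sᶜ)ᶜ) = d1 := by
      rw [Finset.compl_insert, compl_compl, nbrs_erase_self]
    rw [rk_le_iff, defc, if_pos hyS', hc1, hc2]
    omega
  · have hrk : rk G a S y ≤ ℓ := by
      rw [rk_le_iff, defc, if_neg hyS]
      omega
    exact absurd hrky (not_lt.mpr hrk)
end

section
/- Let S=(S,S̄) be a bisection with u ∈ S satisfying def_S(u) ≤ −a_u − 1, and suppose S has minimal potential. Let T = (S̄∪{u}, S∖{u}). Then def_T(u) ≥ a_u + 1, and for every vertex x ∈ S̄ it holds that def_T(x) ≥ −a_x. Hence T is a good bisection with good vertex u. -/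
open Finset

section Aux

variable {V : Type*} [Fintype V] [DecidableEq V] (G : SimpleGraph V) [DecidableRel G.Adj]

lemma nbrs_insert (x y : V) (B : Finset V) (hy : y ∉ B) :
    (nbrs G x (insert y B) : ℤ) = nbrs G x B + (if G.Adj x y then 1 else 0) := by
  unfold nbrs
  rw [Finset.filter_insert]
  split
  · rw [Finset.card_insert_of_notMem (fun h => hy (Finset.mem_of_mem_filter _ h))]
    push_cast; ring
  · simp

lemma nbrs_erase (x u : V) (B : Finset V) (hu : u ∈ B) :
    (nbrs G x (B.erase u) : ℤ) = nbrs G x B - (if G.Adj x u then 1 else 0) := by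
  have h := nbrs_insert G x u (B.erase u) (Finset.notMem_erase u B)
  rw [Finset.insert_erase hu] at h
  linarith

lemma nbrs_compl (x : V) (A : Finset V) :
    (nbrs G x Aᶜ : ℤ) = nbrs G x Finset.univ - nbrs G x A := by
  have : nbrs G x A + nbrs G x Aᶜ = nbrs G x Finset.univ := by
    unfold nbrs
    rw [← Finset.card_union_of_disjoint
      (Finset.disjoint_filter_filter disjoint_compl_right),
      ← Finset.filter_union, Finset.union_compl]
  push_cast [← this]; ring

lemma sum_adj_eq_nbrs (y : V) (B : Finset V) :
    (∑ x ∈ B, (if G.Adj x y then (1 : ℤ) else 0)) = nbrs G y B := by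
  unfold nbrs
  rw [Finset.card_filter]
  push_cast
  refine Finset.sum_congr rfl fun x _ => ?_
  simp [G.adj_comm x y]

lemma f_insert (y : V) (B : Finset V) (hy : y ∉ B) :
    (∑ x ∈ insert y B, (nbrs G x (insert y B) : ℤ))
      = ∑ x ∈ B, (nbrs G x B : ℤ) + 2 * nbrs G y B := by
  rw [Finset.sum_insert hy]
  have h1 : (nbrs G y (insert y B) : ℤ) = nbrs G y B := by
    rw [nbrs_insert G y y B hy]; simp
  have h2 : ∀ x ∈ B, (nbrs G x (insert y B) : ℤ)
      = nbrs G x B + (if G.Adj x y then 1 else 0) := fun x _ =>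
    nbrs_insert G x y B hy
  rw [h1, Finset.sum_congr rfl h2, Finset.sum_add_distrib, sum_adj_eq_nbrs]
  ring

lemma ewZ (A : Finset V) :
    (ew G A Aᶜ : ℤ) = ∑ x ∈ A, (nbrs G x Finset.univ : ℤ)
      - ∑ x ∈ A, (nbrs G x A : ℤ) := by
  unfold ew
  push_cast
  rw [← Finset.sum_sub_distrib]
  exact Finset.sum_congr rfl fun x _ => nbrs_compl G x A

/-- The change in the cut when swapping `u ∈ S` with `y ∉ S`. -/
lemma cut_swap (S : Finset V) (u y : V) (hu : u ∈ S) (hy : y ∉ S) :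
    (ew G (insert y (S.erase u)) (insert y (S.erase u))ᶜ : ℤ)
      = ew G S Sᶜ + defc G S u + defc G S y
        + 2 * (if G.Adj u y then 1 else 0) := by
  have hyE : y ∉ S.erase u := fun h => hy (Finset.mem_of_mem_erase h)
  have hfS : (∑ x ∈ S, (nbrs G x S : ℤ))
      = ∑ x ∈ S.erase u, (nbrs G x (S.erase u) : ℤ) + 2 * nbrs G u (S.erase u) := by
    have := f_insert G u (S.erase u) (Finset.notMem_erase u S)
    rw [Finset.insert_erase hu] at this
    exact this
  have hfS' : (∑ x ∈ insert y (S.erase u), (nbrs G x (insert y (S.erase u)) : ℤ))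
      = ∑ x ∈ S.erase u, (nbrs G x (S.erase u) : ℤ) + 2 * nbrs G y (S.erase u) :=
    f_insert G y (S.erase u) hyE
  have hDsum : (∑ x ∈ insert y (S.erase u), (nbrs G x Finset.univ : ℤ))
      = ∑ x ∈ S, (nbrs G x Finset.univ : ℤ)
        - nbrs G u Finset.univ + nbrs G y Finset.univ := by
    rw [Finset.sum_insert hyE, Finset.sum_erase_eq_sub hu]; ring
  have huu : (nbrs G u (S.erase u) : ℤ) = nbrs G u S := by
    rw [nbrs_erase G u u S hu]; simp
  have hyu : (nbrs G y (S.erase u) : ℤ)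
      = nbrs G y S - (if G.Adj u y then 1 else 0) := by
    rw [nbrs_erase G y u S hu]
    simp [G.adj_comm y u]
  have hcu : (nbrs G u Sᶜ : ℤ) = nbrs G u Finset.univ - nbrs G u S := nbrs_compl G u S
  have hcy : (nbrs G y Sᶜ : ℤ) = nbrs G y Finset.univ - nbrs G y S := nbrs_compl G y S
  rw [ewZ, ewZ, hfS', hDsum]
  unfold defc
  rw [if_pos hu, if_neg hy, hcu, hcy]
  linarith [hfS, huu, hyu]

lemma pot_eq (a : V → ℕ) (A : Finset V) :
    pot G a A = (ew G A Aᶜ : ℚ) + ∑ x ∈ A, (a x : ℚ)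
      - (∑ x : V, (a x : ℚ)) / 2 := by
  unfold pot
  have h : ∑ x ∈ A, (a x : ℚ) + ∑ x ∈ Aᶜ, (a x : ℚ) = ∑ x : V, (a x : ℚ) :=
    Finset.sum_add_sum_compl A _
  linarith

end Aux

/-- Let `S = (S, S̄)` be a bisection of minimal potential with
`u ∈ S` satisfying `def_S(u) ≤ −a_u − 1`, and let `T = (S̄ ∪ {u}, S ∖ {u})`.
Then `def_T(u) ≥ a_u + 1` and `def_T(x) ≥ −a_x` for every `x ∈ S̄`;
hence `T` is a good bisection with good vertex `u`. -/
theorem stmt16 {V : Type*} [Fintype V] [DecidableEq V]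
    (G : SimpleGraph V) [DecidableRel G.Adj] (a : V → ℕ)
    (hodd : Odd (Fintype.card V))
    (S : Finset V) (hbis : 2 * S.card = Fintype.card V + 1)
    (hmin : ∀ x ∈ S, ∀ y ∉ S, pot G a S ≤ pot G a (insert y (S.erase x)))
    (u : V) (hu : u ∈ S) (hdef : defc G S u ≤ -(a u : ℤ) - 1) :
    (a u : ℤ) + 1 ≤ defc G (insert u Sᶜ) u ∧
      ∀ x, x ∉ S → -(a x : ℤ) ≤ defc G (insert u Sᶜ) x := by
  have huc : u ∉ Sᶜ := by simpa using hu
  have hTc : (insert u Sᶜ)ᶜ = S.erase u := by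
    rw [Finset.compl_insert, compl_compl]
  -- defc of u in T
  have hdu : defc G (insert u Sᶜ) u = -(defc G S u) := by
    unfold defc
    rw [if_pos (Finset.mem_insert_self u Sᶜ), if_pos hu, hTc,
      nbrs_insert G u u Sᶜ huc, nbrs_erase G u u S hu]
    simp
  constructor
  · rw [hdu]; linarith
  · intro x hx
    have hxc : x ∈ Sᶜ := Finset.mem_compl.2 hx
    have hxT : x ∈ insert u Sᶜ := Finset.mem_insert_of_mem hxc
    have hdx : defc G (insert u Sᶜ) x
        = defc G S x + 2 * (if G.Adj x u then 1 else 0) := by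
      unfold defc
      rw [if_pos hxT, if_neg hx, hTc, nbrs_insert G x u Sᶜ huc,
        nbrs_erase G x u S hu]
      ring
    -- use minimality with the swap (u, x)
    have hpot := hmin u hu x hx
    rw [pot_eq, pot_eq] at hpot
    have hsum : ∑ z ∈ insert x (S.erase u), (a z : ℚ)
        = ∑ z ∈ S, (a z : ℚ) - a u + a x := by
      rw [Finset.sum_insert (fun h => hx (Finset.mem_of_mem_erase h)),
        Finset.sum_erase_eq_sub hu]
      ring
    rw [hsum] at hpot
    have hew : (ew G S Sᶜ : ℚ) + (a u : ℚ)
        ≤ (ew G (insert x (S.erase u)) (insert x (S.erase u))ᶜ : ℚ) + a x := by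
      linarith
    have hewZ : (ew G S Sᶜ : ℤ) + (a u : ℤ)
        ≤ (ew G (insert x (S.erase u)) (insert x (S.erase u))ᶜ : ℤ) + a x := by
      exact_mod_cast hew
    rw [cut_swap G S u x hu hx] at hewZ
    have hcomm : (if G.Adj u x then (1:ℤ) else 0) = if G.Adj x u then 1 else 0 := by
      simp [G.adj_comm u x]
    rw [hcomm] at hewZ
    rw [hdx]
    linarith
end
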